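/- Let M, N be R-modules, M' a direct summand of M and N' a direct summand of N. If every homomorphism f : M → N satisfies that ker f is a direct summand of M, then every homomorphism g : M' → N' satisfies that ker g is a direct summand of M'. -/

import Mathlib

/-- If `N` is `M`-Rickart, `M'` is a direct summand of `M` and `N'` a direct summand
of `N`, then `N'` is `M'`-Rickart. -/
theorem stmt_15 (R M N : Type*) [Ring R] [AddCommGroup M] [Module R M]
    [AddCommGroup N] [Module R N]
    (M' : Submodule R M) (N' : Submodule R N)
    (hM' : ∃ C : Submodule R M, IsCompl M' C)
    (hN' : ∃ C : Submodule R N, IsCompl N' C)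
    (h : ∀ f : M →ₗ[R] N, ∃ K : Submodule R M, IsCompl (LinearMap.ker f) K) :
    ∀ g : M' →ₗ[R] N', ∃ K : Submodule R M', IsCompl (LinearMap.ker g) K := by
  intro g
  obtain ⟨C, hc⟩ := hM'
  set π : M →ₗ[R] M' := M'.projectionOnto C hc with hπ
  set f : M →ₗ[R] N := N'.subtype ∘ₗ g ∘ₗ π with hf
  obtain ⟨K, hK⟩ := h f
  refine ⟨K.map π, ⟨?_, ?_⟩⟩
  · -- disjoint
    rw [Submodule.disjoint_def]
    intro x hxg hxK
    obtain ⟨k, hk, hkx⟩ := Submodule.mem_map.mp hxK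
    have hkf : k ∈ LinearMap.ker f := by
      have hdiff : k - (x : M) ∈ C := by
        have : π (k - (x : M)) = 0 := by
          rw [map_sub, hkx, Submodule.projectionOnto_apply_left hc x, sub_self]
        exact (Submodule.projectionOnto_apply_eq_zero_iff hc).mp this
      have h1 : f (k - (x : M)) = 0 := by
        simp only [hf, LinearMap.comp_apply]
        rw [Submodule.projectionOnto_apply_of_mem_right hc hdiff]
        simp
      have h2 : f (x : M) = 0 := by
        have hg : g x = 0 := hxg
        simp [hf, hπ, Submodule.projectionOnto_apply_left hc x, hg]
      have hk' : f k = f (k - (x : M)) + f (x : M) := by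
        rw [← map_add, sub_add_cancel]
      show f k = 0
      rw [hk', h1, h2, add_zero]
    have : k = 0 := by
      have := hK.disjoint
      rw [Submodule.disjoint_def] at this
      exact this k hkf hk
    rw [← hkx, this, map_zero]
  · -- codisjoint
    rw [codisjoint_iff_le_sup]
    intro x _
    obtain ⟨a, haf, k, hk, hak⟩ := Submodule.mem_sup.mp
      (hK.codisjoint.eq_top ▸ Submodule.mem_top : (x : M) ∈ LinearMap.ker f ⊔ K)
    have hx : x = π a + π k := by
      have := congrArg π hak
      rw [map_add, Submodule.projectionOnto_apply_left hc x] at this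
      exact this.symm
    refine Submodule.mem_sup.mpr ⟨π a, ?_, π k, Submodule.mem_map_of_mem hk, hx.symm⟩
    have : g (π a) = 0 := by
      have hfa : f a = 0 := haf
      simp only [hf, LinearMap.comp_apply] at hfa
      rw [Submodule.subtype_apply] at hfa
      exact Subtype.coe_injective hfa
    exact this
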